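/- Let Z_1 ≤ … ≤ Z_n be real numbers and u ∈ ℝ^n with all entries u_1,…,u_n distinct. Let ũ be the isotonic median projection with block representation given by breakpoints 1 = n_1 < … < n_m = n+1 and values r_1 < … < r_{m−1} (so ũ_i = r_t for n_t ≤ i < n_{t+1}). For each t ∈ [m−1], define P_t = {ℓ ∈ {n_t,…,n_{t+1}−1}: u_ℓ > r_t} with elements ordered ℓ⁺_{t,1} < … < ℓ⁺_{t,n_t⁺}, and N_t = {ℓ ∈ {n_t,…,n_{t+1}−1}: u_ℓ < r_t} with elements ordered ℓ⁻_{t,1} < … < ℓ⁻_{t,n_t⁻}. Then for every t: n_t⁺ = n_t⁻, and u_ℓ = ũ_ℓ for all ℓ ∈ {n_t,…,n_{t+1}−1} \ (P_t ∪ N_t). Moreover, the isotonic median matching M̃(u) = ∪_{t=1}^{m−1} {(ℓ⁺_{t,1}, ℓ⁻_{t,1}), …, (ℓ⁺_{t,n̄_t}, ℓ⁻_{t,n̄_t})} (with n̄_t = min{n_t⁺, n_t⁻}) is a valid matching: all its indices are distinct and Z_{ℓ⁺_{t,j}} ≤ Z_{ℓ⁻_{t,j}} for every pair. -/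

import Mathlib

noncomputable section

/-- The median of a finite tuple of reals (given as a list). -/
def med (l : List ℝ) : ℝ :=
  let s := Multiset.sort (l : Multiset ℝ) (· ≤ ·)
  if l.length % 2 = 1 then s.getD (l.length / 2) 0
  else (s.getD (l.length / 2 - 1) 0 + s.getD (l.length / 2) 0) / 2

/-- `Med((u_ℓ)_{ℓ : lo ≤ Z_ℓ ≤ hi})`. -/
def subMed (n : ℕ) (Z u : Fin n → ℝ) (lo hi : ℝ) : ℝ :=
  med (((List.finRange n).filter fun ℓ => decide (lo ≤ Z ℓ ∧ Z ℓ ≤ hi)).map u)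

/-- The isotonic median projection
`ũ_i = max_{j : Z_j ≤ Z_i} min_{k : Z_k ≥ Z_i} Med((u_ℓ)_{ℓ : Z_j ≤ Z_ℓ ≤ Z_k})`. -/
def isoMedProj (n : ℕ) (Z u : Fin n → ℝ) (i : Fin n) : ℝ :=
  (Finset.univ.filter fun j => Z j ≤ Z i).sup' ⟨i, by simp⟩ fun j =>
    (Finset.univ.filter fun k => Z i ≤ Z k).inf' ⟨i, by simp⟩ fun k =>
      subMed n Z u (Z j) (Z k)

/-- The set `P_t` of indices in block `[lo, hi)` with `u_ℓ > r_t`. -/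
def blockPos (n : ℕ) (u : Fin n → ℝ) (lo hi : ℕ) (rt : ℝ) : Finset (Fin n) :=
  Finset.univ.filter fun ℓ : Fin n => lo ≤ (ℓ : ℕ) ∧ (ℓ : ℕ) < hi ∧ rt < u ℓ

/-- The set `N_t` of indices in block `[lo, hi)` with `u_ℓ < r_t`. -/
def blockNeg (n : ℕ) (u : Fin n → ℝ) (lo hi : ℕ) (rt : ℝ) : Finset (Fin n) :=
  Finset.univ.filter fun ℓ : Fin n => lo ≤ (ℓ : ℕ) ∧ (ℓ : ℕ) < hi ∧ u ℓ < rt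

/-- The `j`-th (0-indexed) smallest element of a finite set of indices. -/
def nthIdx (n : ℕ) (hn : 0 < n) (s : Finset (Fin n)) (j : ℕ) : Fin n :=
  (s.sort (· ≤ ·)).getD j ⟨0, hn⟩

namespace IsoAux

lemma count_ge_of_sorted {s : List ℝ} (hs : s.Pairwise (· ≤ ·)) (p : ℝ → Bool)
    (i : ℕ) (hi : i ≤ s.length)
    (hmono : ∀ x y, x ≤ y → p x = true → p y = true)
    (hp : ∀ (h : i < s.length), True)
    : True := trivial

/-- if the first `i` elements (positions `< i`) all satisfy `p`, then `i ≤ countP`. -/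
lemma le_countP_of_prefix {s : List ℝ} (p : ℝ → Bool) (i : ℕ) (hi : i ≤ s.length)
    (h : ∀ j (hj : j < i), p (s[j]'(lt_of_lt_of_le hj hi)) = true) :
    i ≤ s.countP p := by
  conv_rhs => rw [← List.take_append_drop i s]
  rw [List.countP_append]
  have hlen : (s.take i).length = i := by simp [hi]
  have : (s.take i).countP p = (s.take i).length := by
    rw [List.countP_eq_length]
    intro a ha
    obtain ⟨j, hj, rfl⟩ := List.mem_iff_getElem.mp ha
    rw [List.getElem_take]
    exact h j (by simpa [hlen] using hj)
  omega

/-- if all elements at positions `≥ i` fail `p`, then `countP ≤ i`. -/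
lemma countP_le_of_suffix {s : List ℝ} (p : ℝ → Bool) (i : ℕ) (hi : i ≤ s.length)
    (h : ∀ j (hj : j < s.length), i ≤ j → p (s[j]'hj) = false) :
    s.countP p ≤ i := by
  conv_lhs => rw [← List.take_append_drop i s]
  rw [List.countP_append]
  have hlen : (s.take i).length = i := by simp [hi]
  have h2 : (s.drop i).countP p = 0 := by
    rw [List.countP_eq_zero]
    intro a ha
    obtain ⟨j, hj, rfl⟩ := List.mem_iff_getElem.mp ha
    have hj' : i + j < s.length := by
      have := hj; simp only [List.length_drop] at this; omega
    rw [List.getElem_drop]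
    have := h (i + j) hj' (by omega)
    simp [this]
  have h3 : (s.take i).countP p ≤ i := by
    calc (s.take i).countP p ≤ (s.take i).length := List.countP_le_length
    _ = i := hlen
  omega

/-- if all elements at positions `≥ i` satisfy `p`, then `length - i ≤ countP`. -/
lemma le_countP_of_suffix {s : List ℝ} (p : ℝ → Bool) (i : ℕ) (hi : i ≤ s.length)
    (h : ∀ j (hj : j < s.length), i ≤ j → p (s[j]'hj) = true) :
    s.length - i ≤ s.countP p := by
  conv_rhs => rw [← List.take_append_drop i s]
  rw [List.countP_append]
  have hlen : (s.drop i).length = s.length - i := by simp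
  have : (s.drop i).countP p = (s.drop i).length := by
    rw [List.countP_eq_length]
    intro a ha
    obtain ⟨j, hj, rfl⟩ := List.mem_iff_getElem.mp ha
    have hj' : i + j < s.length := by
      have := hj; simp only [List.length_drop] at this; omega
    rw [List.getElem_drop]
    exact h (i + j) hj' (by omega)
  omega

end IsoAux

namespace IsoAux2
open IsoAux

variable {l : List ℝ} {c : ℝ}

lemma countP_le_split (l : List ℝ) (c : ℝ) :
    l.countP (fun x => decide (x ≤ c))
      = l.countP (fun x => decide (x < c)) + l.countP (fun x => decide (x = c)) := by
  induction l with
  | nil => simp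
  | cons a l ih =>
    simp only [List.countP_cons, ih]
    rcases lt_trichotomy a c with h | h | h
    · simp [h, le_of_lt h, ne_of_lt h]; omega
    · simp [h]; omega
    · simp [h, not_le_of_gt h, not_lt_of_gt h, (ne_of_gt h)]

lemma countP_ge_split (l : List ℝ) (c : ℝ) :
    l.countP (fun x => decide (c ≤ x))
      = l.countP (fun x => decide (c < x)) + l.countP (fun x => decide (x = c)) := by
  induction l with
  | nil => simp
  | cons a l ih =>
    simp only [List.countP_cons, ih]
    rcases lt_trichotomy a c with h | h | h
    · simp [h, not_le_of_gt h, not_lt_of_gt h, ne_of_lt h]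
    · simp [h]; omega
    · simp [le_of_lt h, h, (ne_of_gt h)]; omega

lemma length_split (l : List ℝ) (c : ℝ) :
    l.length = l.countP (fun x => decide (x < c)) + l.countP (fun x => decide (x = c))
      + l.countP (fun x => decide (c < x)) := by
  have h := List.length_eq_countP_add_countP (l := l) (p := fun x => decide (x ≤ c))
  rw [countP_le_split l c] at h
  have h2 : l.countP (fun x => ¬ decide (x ≤ c)) = l.countP (fun x => decide (c < x)) := by
    apply List.countP_congr
    intro x _
    simp [not_le]
  omega

/-- Main median-count lemma, `≤` direction. -/
lemma med_le_count (h1 : l.countP (fun x => decide (x = c)) ≤ 1) (h : med l ≤ c) :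
    l.countP (fun x => decide (c < x)) ≤ l.countP (fun x => decide (x < c)) := by
  classical
  set s := Multiset.sort (l : Multiset ℝ) (· ≤ ·) with hsdef
  have hperm : s.Perm l := Multiset.coe_eq_coe.mp (Multiset.sort_eq _ _)
  have hlen : s.length = l.length := hperm.length_eq
  have hsort : s.Pairwise (· ≤ ·) := Multiset.pairwise_sort _ _
  have hcnt : ∀ p : ℝ → Bool, s.countP p = l.countP p := fun p => hperm.countP_eq p
  have hpair : ∀ i j (hi : i < s.length) (hj : j < s.length), i ≤ j → s[i] ≤ s[j] := by
    intro i j hi hj hij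
    rcases eq_or_lt_of_le hij with rfl | hlt
    · exact le_refl _
    · exact List.pairwise_iff_getElem.mp hsort i j hi hj hlt
  suffices hgoal : s.countP (fun x => decide (c < x)) ≤ s.countP (fun x => decide (x < c)) by
    rw [← hcnt, ← hcnt]; exact hgoal
  have h1' : s.countP (fun x => decide (x = c)) ≤ 1 := by rw [hcnt]; exact h1
  rcases Nat.eq_zero_or_pos l.length with hL0 | hLpos
  · have : s.length = 0 := by omega
    calc s.countP (fun x => decide (c < x)) ≤ s.length := List.countP_le_length
      _ = 0 := this
      _ ≤ _ := Nat.zero_le _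
  have hsplit1 := countP_le_split s c
  have hsplit2 := length_split s c
  set A := s.countP (fun x => decide (x < c)) with hA
  set B := s.countP (fun x => decide (x = c)) with hB
  set D := s.countP (fun x => decide (c < x)) with hD
  rw [med] at h
  simp only [← hsdef] at h
  rcases Nat.mod_two_eq_zero_or_one l.length with hpar | hpar
  · -- even case
    rw [if_neg (by omega)] at h
    set k := l.length / 2 with hk
    have hkk : k - 1 < s.length := by omega
    have hkk2 : k < s.length := by omega
    rw [List.getD_eq_getElem s 0 hkk, List.getD_eq_getElem s 0 hkk2] at h
    by_cases hks : s[k] ≤ c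
    · have hpre : k + 1 ≤ s.countP (fun x => decide (x ≤ c)) := by
        apply le_countP_of_prefix _ (k+1) (by omega)
        intro j hj
        simp only [decide_eq_true_eq]
        exact le_trans (hpair j k (by omega) hkk2 (by omega)) hks
      omega
    · push_neg at hks
      have hk1 : s[k-1] < c := by
        have hkge1 : (1:ℕ) ≤ k := by omega
        nlinarith [h, hks]
      have hpre : k ≤ A := by
        rw [hA]
        apply le_countP_of_prefix _ k (by omega)
        intro j hj
        simp only [decide_eq_true_eq]
        exact lt_of_le_of_lt (hpair j (k-1) (by omega) hkk (by omega)) hk1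
      have hsuf : s.countP (fun x => decide (x ≤ c)) ≤ k := by
        apply countP_le_of_suffix _ k (by omega)
        intro j hj hjk
        simp only [decide_eq_false_iff_not, not_le]
        exact lt_of_lt_of_le hks (hpair k j hkk2 hj hjk)
      omega
  · -- odd case
    rw [if_pos hpar] at h
    set k := l.length / 2 with hk
    have hkk : k < s.length := by omega
    rw [List.getD_eq_getElem s 0 hkk] at h
    have hpre : k + 1 ≤ s.countP (fun x => decide (x ≤ c)) := by
      apply le_countP_of_prefix _ (k+1) (by omega)
      intro j hj
      simp only [decide_eq_true_eq]
      exact le_trans (hpair j k (by omega) hkk (by omega)) h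
    omega

/-- Main median-count lemma, `≥` direction. -/
lemma med_ge_count (h1 : l.countP (fun x => decide (x = c)) ≤ 1) (h : c ≤ med l) :
    l.countP (fun x => decide (x < c)) ≤ l.countP (fun x => decide (c < x)) := by
  classical
  set s := Multiset.sort (l : Multiset ℝ) (· ≤ ·) with hsdef
  have hperm : s.Perm l := Multiset.coe_eq_coe.mp (Multiset.sort_eq _ _)
  have hlen : s.length = l.length := hperm.length_eq
  have hsort : s.Pairwise (· ≤ ·) := Multiset.pairwise_sort _ _
  have hcnt : ∀ p : ℝ → Bool, s.countP p = l.countP p := fun p => hperm.countP_eq p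
  have hpair : ∀ i j (hi : i < s.length) (hj : j < s.length), i ≤ j → s[i] ≤ s[j] := by
    intro i j hi hj hij
    rcases eq_or_lt_of_le hij with rfl | hlt
    · exact le_refl _
    · exact List.pairwise_iff_getElem.mp hsort i j hi hj hlt
  suffices hgoal : s.countP (fun x => decide (x < c)) ≤ s.countP (fun x => decide (c < x)) by
    rw [← hcnt, ← hcnt]; exact hgoal
  have h1' : s.countP (fun x => decide (x = c)) ≤ 1 := by rw [hcnt]; exact h1
  rcases Nat.eq_zero_or_pos l.length with hL0 | hLpos
  · have : s.length = 0 := by omega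
    calc s.countP (fun x => decide (x < c)) ≤ s.length := List.countP_le_length
      _ = 0 := this
      _ ≤ _ := Nat.zero_le _
  have hsplit1 := countP_ge_split s c
  have hsplit2 := length_split s c
  set A := s.countP (fun x => decide (x < c)) with hA
  set B := s.countP (fun x => decide (x = c)) with hB
  set D := s.countP (fun x => decide (c < x)) with hD
  rw [med] at h
  simp only [← hsdef] at h
  rcases Nat.mod_two_eq_zero_or_one l.length with hpar | hpar
  · -- even case
    rw [if_neg (by omega)] at h
    set k := l.length / 2 with hk
    have hkk : k - 1 < s.length := by omega
    have hkk2 : k < s.length := by omega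
    rw [List.getD_eq_getElem s 0 hkk, List.getD_eq_getElem s 0 hkk2] at h
    by_cases hks : c ≤ s[k-1]
    · have hsuf : s.length - (k-1) ≤ s.countP (fun x => decide (c ≤ x)) := by
        apply le_countP_of_suffix _ (k-1) (by omega)
        intro j hj hjk
        simp only [decide_eq_true_eq]
        exact le_trans hks (hpair (k-1) j hkk hj hjk)
      omega
    · push_neg at hks
      have hk1 : c < s[k] := by
        have hkge1 : (1:ℕ) ≤ k := by omega
        nlinarith [h, hks]
      have hsufD : s.length - k ≤ D := by
        rw [hD]
        apply le_countP_of_suffix _ k (by omega)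
        intro j hj hjk
        simp only [decide_eq_true_eq]
        exact lt_of_lt_of_le hk1 (hpair k j hkk2 hj hjk)
      have hpreA : A ≤ k := by
        rw [hA]
        apply countP_le_of_suffix _ k (by omega)
        intro j hj hjk
        simp only [decide_eq_false_iff_not, not_lt]
        exact le_of_lt (lt_of_lt_of_le hk1 (hpair k j hkk2 hj (by omega)))
      omega
  · -- odd case
    rw [if_pos hpar] at h
    set k := l.length / 2 with hk
    have hkk : k < s.length := by omega
    rw [List.getD_eq_getElem s 0 hkk] at h
    have hsufD : s.length - k ≤ s.countP (fun x => decide (c ≤ x)) := by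
      apply le_countP_of_suffix _ k (by omega)
      intro j hj hjk
      simp only [decide_eq_true_eq]
      exact le_trans h (hpair k j hkk hj hjk)
    omega

end IsoAux2

namespace IsoAux3
open Finset

variable {n : ℕ} {Z u : Fin n → ℝ}

lemma countP_finRange (P : Fin n → Prop) [DecidablePred P] :
    (List.finRange n).countP (fun ℓ => decide (P ℓ)) = (univ.filter P).card := by
  rw [Fin.univ_def, Finset.filter]
  simp only [Finset.card_mk, Multiset.filter_coe, Multiset.coe_card,
    List.countP_eq_length_filter]

/-- translation of `countP` on the window list to a `Finset` card. -/
lemma countP_window (lo hi : ℝ) (q : ℝ → Prop) [DecidablePred q] :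
    (((List.finRange n).filter fun ℓ => decide (lo ≤ Z ℓ ∧ Z ℓ ≤ hi)).map u).countP
        (fun x => decide (q x))
      = (univ.filter fun ℓ => (lo ≤ Z ℓ ∧ Z ℓ ≤ hi) ∧ q (u ℓ)).card := by
  classical
  rw [List.countP_map, List.countP_filter, ← countP_finRange]
  apply List.countP_congr
  intro ℓ _
  by_cases h1 : lo ≤ Z ℓ ∧ Z ℓ ≤ hi <;> by_cases h2 : q (u ℓ) <;> simp [h1, h2]

end IsoAux3

namespace IsoAux4
open Finset

variable {n : ℕ} {Z u : Fin n → ℝ}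

lemma tool_A (i j : Fin n) (hj : Z j ≤ Z i) :
    ∃ k, Z i ≤ Z k ∧ subMed n Z u (Z j) (Z k) ≤ isoMedProj n Z u i := by
  classical
  have hne : ((univ : Finset (Fin n)).filter fun k => Z i ≤ Z k).Nonempty := ⟨i, by simp⟩
  have hjm : j ∈ (univ : Finset (Fin n)).filter fun j => Z j ≤ Z i := by simp [hj]
  have h1 : (((univ : Finset (Fin n)).filter fun k => Z i ≤ Z k).inf' hne
      fun k => subMed n Z u (Z j) (Z k)) ≤ isoMedProj n Z u i :=
    Finset.le_sup' (f := fun j => ((univ : Finset (Fin n)).filter fun k => Z i ≤ Z k).inf'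
      ⟨i, by simp⟩ fun k => subMed n Z u (Z j) (Z k)) hjm
  obtain ⟨k, hk, he⟩ := Finset.exists_mem_eq_inf' hne fun k => subMed n Z u (Z j) (Z k)
  refine ⟨k, (Finset.mem_filter.mp hk).2, ?_⟩
  rw [← he]; exact h1

lemma tool_B (i : Fin n) :
    ∃ j, Z j ≤ Z i ∧ ∀ k, Z i ≤ Z k → isoMedProj n Z u i ≤ subMed n Z u (Z j) (Z k) := by
  classical
  have hne : ((univ : Finset (Fin n)).filter fun j => Z j ≤ Z i).Nonempty := ⟨i, by simp⟩
  obtain ⟨j, hjm, he⟩ := Finset.exists_mem_eq_sup' hne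
    (fun j => ((univ : Finset (Fin n)).filter fun k => Z i ≤ Z k).inf'
      ⟨i, by simp⟩ fun k => subMed n Z u (Z j) (Z k))
  refine ⟨j, (Finset.mem_filter.mp hjm).2, fun k hk => ?_⟩
  have : isoMedProj n Z u i = ((univ : Finset (Fin n)).filter fun k => Z i ≤ Z k).inf'
      ⟨i, by simp⟩ fun k => subMed n Z u (Z j) (Z k) := he
  rw [this]
  exact Finset.inf'_le _ (by simp [hk])

end IsoAux4


namespace IsoAux5
open Finset

variable {n : ℕ} {Z u : Fin n → ℝ}

lemma eqcount_le_one (hu : Function.Injective u) (lo hi c : ℝ) :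
    (((List.finRange n).filter fun ℓ => decide (lo ≤ Z ℓ ∧ Z ℓ ≤ hi)).map u).countP
      (fun x => decide (x = c)) ≤ 1 := by
  classical
  rw [IsoAux3.countP_window]
  apply Finset.card_le_one.mpr
  intro a ha b hb
  simp only [Finset.mem_filter] at ha hb
  exact hu (ha.2.2.trans hb.2.2.symm)

lemma submed_le_count (hu : Function.Injective u) {lo hi c : ℝ}
    (h : subMed n Z u lo hi ≤ c) :
    (univ.filter fun ℓ => (lo ≤ Z ℓ ∧ Z ℓ ≤ hi) ∧ c < u ℓ).card
      ≤ (univ.filter fun ℓ => (lo ≤ Z ℓ ∧ Z ℓ ≤ hi) ∧ u ℓ < c).card := by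
  classical
  have h' : med (((List.finRange n).filter fun ℓ => decide (lo ≤ Z ℓ ∧ Z ℓ ≤ hi)).map u) ≤ c := h
  have := IsoAux2.med_le_count (eqcount_le_one hu lo hi c) h'
  rwa [IsoAux3.countP_window, IsoAux3.countP_window] at this

lemma submed_ge_count (hu : Function.Injective u) {lo hi c : ℝ}
    (h : c ≤ subMed n Z u lo hi) :
    (univ.filter fun ℓ => (lo ≤ Z ℓ ∧ Z ℓ ≤ hi) ∧ u ℓ < c).card
      ≤ (univ.filter fun ℓ => (lo ≤ Z ℓ ∧ Z ℓ ≤ hi) ∧ c < u ℓ).card := by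
  classical
  have h' : c ≤ med (((List.finRange n).filter fun ℓ => decide (lo ≤ Z ℓ ∧ Z ℓ ≤ hi)).map u) := h
  have := IsoAux2.med_ge_count (eqcount_le_one hu lo hi c) h'
  rwa [IsoAux3.countP_window, IsoAux3.countP_window] at this

end IsoAux5

namespace IsoMain
open Finset

variable {n : ℕ} {Z u : Fin n → ℝ} {m : ℕ} {b : Fin (m + 1) → ℕ} {r : Fin m → ℝ}

lemma cover (hb0 : b 0 = 0) (hbn : b (Fin.last m) = n) (hbmono : StrictMono b)
    (i : Fin n) : ∃ t : Fin m, b t.castSucc ≤ (i : ℕ) ∧ (i : ℕ) < b t.succ := by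
  classical
  have hTne : ((univ : Finset (Fin (m + 1))).filter fun s => b s ≤ (i : ℕ)).Nonempty := by
    refine ⟨0, ?_⟩
    simp [hb0]
  set T := (univ : Finset (Fin (m + 1))).filter fun s => b s ≤ (i : ℕ) with hT
  set s := T.max' hTne with hs
  have hsm : s ∈ T := T.max'_mem hTne
  have hsle : b s ≤ (i : ℕ) := (Finset.mem_filter.mp hsm).2
  have hslt : (s : ℕ) < m := by
    rcases lt_or_eq_of_le (Fin.le_last s) with h | h
    · exact h
    · exfalso
      have : b s = n := by rw [h, hbn]
      omega
  refine ⟨⟨s, hslt⟩, ?_, ?_⟩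
  · have : Fin.castSucc ⟨(s : ℕ), hslt⟩ = s := by ext; simp
    rw [this]; exact hsle
  · by_contra hcon
    push_neg at hcon
    have hmem : Fin.succ ⟨(s : ℕ), hslt⟩ ∈ T := by
      rw [hT]; simp only [Finset.mem_filter, Finset.mem_univ, true_and]; exact hcon
    have hle := T.le_max' _ hmem
    rw [← hs] at hle
    have : (s : ℕ) + 1 ≤ (s : ℕ) := by
      have := Fin.le_def.mp hle
      simpa using this
    omega

lemma block_uniq (hbmono : StrictMono b) {t t' : Fin m} {x : ℕ}
    (h1 : b t.castSucc ≤ x) (h2 : x < b t.succ)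
    (h1' : b t'.castSucc ≤ x) (h2' : x < b t'.succ) : t = t' := by
  have key : ∀ t t' : Fin m, t < t' → b t.castSucc ≤ x → x < b t.succ →
      b t'.castSucc ≤ x → x < b t'.succ → False := by
    intro a a' hlt ha1 ha2 ha1' ha2'
    have hle : a.succ ≤ a'.castSucc := by
      rw [Fin.le_def]
      simp only [Fin.val_succ, Fin.coe_castSucc]
      exact Fin.lt_def.mp hlt
    have := hbmono.monotone hle
    omega
  rcases lt_trichotomy t t' with h | h | h
  · exact absurd (key t t' h h1 h2 h1' h2') (by simp)
  · exact h
  · exact absurd (key t' t h h1' h2' h1 h2) (by simp)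

lemma proj_congr {i i' : Fin n} (h : Z i = Z i') :
    isoMedProj n Z u i = isoMedProj n Z u i' := by
  simp only [isoMedProj, h]

variable (hZ : Monotone Z) (hu : Function.Injective u)
  (hb0 : b 0 = 0) (hbn : b (Fin.last m) = n) (hbmono : StrictMono b)
  (hrmono : StrictMono r)
  (hrep : ∀ (t : Fin m) (i : Fin n),
      b t.castSucc ≤ (i : ℕ) → (i : ℕ) < b t.succ → isoMedProj n Z u i = r t)

include hb0 hbn hbmono hrep in
lemma proj_block (i : Fin n) :
    ∃ t : Fin m, b t.castSucc ≤ (i : ℕ) ∧ (i : ℕ) < b t.succ ∧ isoMedProj n Z u i = r t := by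
  obtain ⟨t, h1, h2⟩ := cover hb0 hbn hbmono i
  exact ⟨t, h1, h2, hrep t i h1 h2⟩

include hb0 hbn hbmono hrmono hrep in
lemma proj_mono {i i' : Fin n} (h : (i : ℕ) ≤ (i' : ℕ)) :
    isoMedProj n Z u i ≤ isoMedProj n Z u i' := by
  obtain ⟨t, h1, h2, h3⟩ := proj_block hb0 hbn hbmono hrep i
  obtain ⟨t', h1', h2', h3'⟩ := proj_block hb0 hbn hbmono hrep i'
  rw [h3, h3']
  have htt : t ≤ t' := by
    by_contra hcon
    push_neg at hcon
    have hle : t'.succ ≤ t.castSucc := by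
      rw [Fin.le_def]
      simp only [Fin.val_succ, Fin.coe_castSucc]
      exact Fin.lt_def.mp hcon
    have := hbmono.monotone hle
    omega
  exact hrmono.monotone htt

include hZ hb0 hbn hbmono hrmono hrep in
lemma proj_sep {i i' : Fin n} (h : isoMedProj n Z u i < isoMedProj n Z u i') :
    Z i < Z i' := by
  by_contra hcon
  push_neg at hcon
  rcases eq_or_lt_of_le hcon with he | hlt
  · rw [proj_congr he.symm] at h
    exact lt_irrefl _ h
  · have hii : (i' : ℕ) ≤ (i : ℕ) := by
      by_contra hc
      push_neg at hc
      have : i ≤ i' := le_of_lt hc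
      exact absurd (hZ this) (not_le.mpr hlt)
    exact absurd (proj_mono hb0 hbn hbmono hrmono hrep hii) (not_le.mpr h)

lemma partition_card {α : Type*} [DecidableEq α] {W A B : Finset α}
    (hd : ∀ x, x ∈ A → x ∈ B → False) (hun : ∀ x, x ∈ W ↔ x ∈ A ∨ x ∈ B) :
    W.card = A.card + B.card := by
  have hW : W = A ∪ B := by
    ext x
    simp only [Finset.mem_union]
    exact hun x
  rw [hW, Finset.card_union_of_disjoint]
  rw [Finset.disjoint_left]
  intro a ha hb
  exact hd a ha hb

include hZ hu hb0 hbn hbmono hrmono hrep in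
/-- MASTER 2: on `Z`-prefixes of the upper region `{φ (proj ·)}`, values `< c` are
dominated by values `> c`. -/
lemma master2 (c : ℝ) (φ : ℝ → Prop) [DecidablePred φ]
    (hφub : ∀ v, φ v → c ≤ v) (hφlb : ∀ v, ¬ φ v → v ≤ c) (z : ℝ) :
    (univ.filter fun ℓ => (φ (isoMedProj n Z u ℓ) ∧ Z ℓ ≤ z) ∧ u ℓ < c).card
      ≤ (univ.filter fun ℓ => (φ (isoMedProj n Z u ℓ) ∧ Z ℓ ≤ z) ∧ c < u ℓ).card := by
  classical
  set p := isoMedProj n Z u with hp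
  have hsepφ : ∀ i i' : Fin n, ¬ φ (p i) → φ (p i') → Z i < Z i' := by
    intro i i' h1 h2
    apply proj_sep hZ hb0 hbn hbmono hrmono hrep
    rw [← hp]
    exact lt_of_le_of_ne (le_trans (hφlb _ h1) (hφub _ h2)) (fun he => h1 (he ▸ h2))
  by_cases hTne : (univ.filter fun ℓ => φ (p ℓ) ∧ Z ℓ ≤ z).Nonempty
  · obtain ⟨w, hw⟩ := hTne
    have hTne : (univ.filter fun ℓ => φ (p ℓ) ∧ Z ℓ ≤ z).Nonempty := ⟨w, hw⟩
    have hUcne : (univ.filter fun ℓ => φ (p ℓ)).Nonempty :=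
      ⟨w, by simp only [Finset.mem_filter] at hw ⊢; exact ⟨hw.1, hw.2.1⟩⟩
    obtain ⟨i'', hi''m, hi''min⟩ := Finset.exists_min_image _ Z hUcne
    have hφi'' : φ (p i'') := (Finset.mem_filter.mp hi''m).2
    obtain ⟨jh, hjhle, hjh⟩ := IsoAux4.tool_B (Z := Z) (u := u) i''
    obtain ⟨k, hkm, hkmax⟩ := Finset.exists_max_image _ Z hTne
    have hkφ : φ (p k) := (Finset.mem_filter.mp hkm).2.1
    have hkz : Z k ≤ z := (Finset.mem_filter.mp hkm).2.2
    have hik : Z i'' ≤ Z k := hi''min k (by simp [hkφ])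
    have hmed : c ≤ subMed n Z u (Z jh) (Z k) := le_trans (hφub _ hφi'') (hjh k hik)
    have hcnt := IsoAux5.submed_ge_count hu hmed
    by_cases hφjh : φ (p jh)
    · -- easy case: the window coincides with the prefix set
      have hcore : ∀ x : Fin n, (Z jh ≤ Z x ∧ Z x ≤ Z k) ↔ (φ (p x) ∧ Z x ≤ z) := by
        intro x
        constructor
        · rintro ⟨hx1, hx2⟩
          have hφx : φ (p x) := by
            by_contra hc
            exact absurd hx1 (not_le.mpr (hsepφ x jh hc hφjh))
          exact ⟨hφx, le_trans hx2 hkz⟩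
        · rintro ⟨hφx, hxz⟩
          refine ⟨le_trans hjhle (hi''min x (by simp [hφx])), hkmax x (by simp [hφx, hxz])⟩
      have e1 : (univ.filter fun ℓ => (Z jh ≤ Z ℓ ∧ Z ℓ ≤ Z k) ∧ u ℓ < c)
          = (univ.filter fun ℓ => (φ (p ℓ) ∧ Z ℓ ≤ z) ∧ u ℓ < c) := by
        apply Finset.filter_congr
        intro x _
        exact and_congr_left (fun _ => hcore x)
      have e2 : (univ.filter fun ℓ => (Z jh ≤ Z ℓ ∧ Z ℓ ≤ Z k) ∧ c < u ℓ)
          = (univ.filter fun ℓ => (φ (p ℓ) ∧ Z ℓ ≤ z) ∧ c < u ℓ) := by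
        apply Finset.filter_congr
        intro x _
        exact and_congr_left (fun _ => hcore x)
      rw [← e1, ← e2]
      exact hcnt
    · -- hard case
      have hUne : (univ.filter fun ℓ => ¬ φ (p ℓ)).Nonempty := ⟨jh, by simp [hφjh]⟩
      obtain ⟨i₀, hi₀m, hi₀max⟩ := Finset.exists_max_image _ Z hUne
      have hφi₀ : ¬ φ (p i₀) := (Finset.mem_filter.mp hi₀m).2
      have hjhi₀ : Z jh ≤ Z i₀ := hi₀max jh (by simp [hφjh])
      obtain ⟨k₁, hk₁, hmed₁⟩ := IsoAux4.tool_A (Z := Z) (u := u) i₀ jh hjhi₀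
      have hmed₁c : subMed n Z u (Z jh) (Z k₁) ≤ c := le_trans hmed₁ (hφlb _ hφi₀)
      have hk₁lt : Z k₁ < Z i'' := by
        by_contra hcc
        push_neg at hcc
        have h1 := hjh k₁ hcc
        have ha : c ≤ p i'' := hφub _ hφi''
        have hb2 : p i₀ ≤ c := hφlb _ hφi₀
        have hchain : p i'' ≤ p i₀ := le_trans h1 hmed₁
        have he1 : p i'' = c := le_antisymm (le_trans hchain hb2) ha
        have he2 : p i₀ = c := le_antisymm hb2 (le_trans ha hchain)
        exact hφi₀ (he2 ▸ (he1 ▸ hφi''))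
      have hstar := IsoAux5.submed_le_count hu hmed₁c
      have hcore2 : ∀ x : Fin n, (Z jh ≤ Z x ∧ Z x ≤ Z k₁) → (φ (p x) ∧ Z x ≤ z) → False := by
        rintro x ⟨_, hx2⟩ ⟨hφx, _⟩
        have : Z i'' ≤ Z x := hi''min x (by simp [hφx])
        exact absurd (le_trans this hx2) (not_le.mpr hk₁lt)
      have hcore1 : ∀ x : Fin n,
          (Z jh ≤ Z x ∧ Z x ≤ Z k) ↔ ((Z jh ≤ Z x ∧ Z x ≤ Z k₁) ∨ (φ (p x) ∧ Z x ≤ z)) := by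
        intro x
        constructor
        · rintro ⟨hx1, hx2⟩
          by_cases hφx : φ (p x)
          · exact Or.inr ⟨hφx, le_trans hx2 hkz⟩
          · exact Or.inl ⟨hx1, le_trans (hi₀max x (by simp [hφx])) hk₁⟩
        · rintro (⟨hx1, hx2⟩ | ⟨hφx, hxz⟩)
          · exact ⟨hx1, le_trans hx2 (le_trans (le_of_lt hk₁lt) hik)⟩
          · exact ⟨le_trans hjhle (hi''min x (by simp [hφx])), hkmax x (by simp [hφx, hxz])⟩
      have hpart : ∀ (q : Fin n → Prop) (_ : DecidablePred q),
          (univ.filter fun ℓ => (Z jh ≤ Z ℓ ∧ Z ℓ ≤ Z k) ∧ q ℓ).card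
            = (univ.filter fun ℓ => (Z jh ≤ Z ℓ ∧ Z ℓ ≤ Z k₁) ∧ q ℓ).card
              + (univ.filter fun ℓ => (φ (p ℓ) ∧ Z ℓ ≤ z) ∧ q ℓ).card := by
        intro q hq
        apply partition_card
        · intro x hx1 hx2
          simp only [Finset.mem_filter] at hx1 hx2
          exact hcore2 x hx1.2.1 hx2.2.1
        · intro x
          simp only [Finset.mem_filter, Finset.mem_univ, true_and]
          constructor
          · rintro ⟨hx, hqx⟩
            rcases (hcore1 x).mp hx with h | h
            · exact Or.inl ⟨h, hqx⟩
            · exact Or.inr ⟨h, hqx⟩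
          · rintro (⟨hx, hqx⟩ | ⟨hx, hqx⟩)
            · exact ⟨(hcore1 x).mpr (Or.inl hx), hqx⟩
            · exact ⟨(hcore1 x).mpr (Or.inr hx), hqx⟩
      have h3 := hpart (fun ℓ => u ℓ < c) (by infer_instance)
      have h4 := hpart (fun ℓ => c < u ℓ) (by infer_instance)
      omega
  · have e := Finset.not_nonempty_iff_eq_empty.mp hTne
    have c1 : (univ.filter fun ℓ => (φ (p ℓ) ∧ Z ℓ ≤ z) ∧ u ℓ < c).card = 0 := by
      rw [Finset.card_eq_zero, ← Finset.subset_empty, ← e]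
      exact Finset.monotone_filter_right _ (fun x _ h => h.1)
    rw [c1]
    exact Nat.zero_le _

include hZ hu hb0 hbn hbmono hrmono hrep in
/-- MASTER 1: on `Z`-suffixes of the lower region `{¬ φ (proj ·)}`, values `> c` are
dominated by values `< c`. -/
lemma master1 (c : ℝ) (φ : ℝ → Prop) [DecidablePred φ]
    (hφub : ∀ v, φ v → c ≤ v) (hφlb : ∀ v, ¬ φ v → v ≤ c) (z : ℝ) :
    (univ.filter fun ℓ => (¬ φ (isoMedProj n Z u ℓ) ∧ z ≤ Z ℓ) ∧ c < u ℓ).card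
      ≤ (univ.filter fun ℓ => (¬ φ (isoMedProj n Z u ℓ) ∧ z ≤ Z ℓ) ∧ u ℓ < c).card := by
  classical
  set p := isoMedProj n Z u with hp
  have hsepφ : ∀ i i' : Fin n, ¬ φ (p i) → φ (p i') → Z i < Z i' := by
    intro i i' h1 h2
    apply proj_sep hZ hb0 hbn hbmono hrmono hrep
    rw [← hp]
    exact lt_of_le_of_ne (le_trans (hφlb _ h1) (hφub _ h2)) (fun he => h1 (he ▸ h2))
  by_cases hSne : (univ.filter fun ℓ => ¬ φ (p ℓ) ∧ z ≤ Z ℓ).Nonempty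
  · obtain ⟨w, hw⟩ := hSne
    have hSne : (univ.filter fun ℓ => ¬ φ (p ℓ) ∧ z ≤ Z ℓ).Nonempty := ⟨w, hw⟩
    have hUne : (univ.filter fun ℓ => ¬ φ (p ℓ)).Nonempty :=
      ⟨w, by simp only [Finset.mem_filter] at hw ⊢; exact ⟨hw.1, hw.2.1⟩⟩
    obtain ⟨i₀, hi₀m, hi₀max⟩ := Finset.exists_max_image _ Z hUne
    have hφi₀ : ¬ φ (p i₀) := (Finset.mem_filter.mp hi₀m).2
    obtain ⟨j, hjm, hjmin⟩ := Finset.exists_min_image _ Z hSne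
    have hjU : ¬ φ (p j) := (Finset.mem_filter.mp hjm).2.1
    have hjz : z ≤ Z j := (Finset.mem_filter.mp hjm).2.2
    have hji₀ : Z j ≤ Z i₀ := hi₀max j (by simp [hjU])
    obtain ⟨k₁, hk₁, hmed₁⟩ := IsoAux4.tool_A (Z := Z) (u := u) i₀ j hji₀
    have hmedc : subMed n Z u (Z j) (Z k₁) ≤ c := le_trans hmed₁ (hφlb _ hφi₀)
    have hstar := IsoAux5.submed_le_count hu hmedc
    have hcore2 : ∀ x : Fin n, (¬ φ (p x) ∧ z ≤ Z x) → (φ (p x) ∧ Z x ≤ Z k₁) → False :=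
      fun x hx1 hx2 => hx1.1 hx2.1
    have hcore1 : ∀ x : Fin n,
        (Z j ≤ Z x ∧ Z x ≤ Z k₁) ↔ ((¬ φ (p x) ∧ z ≤ Z x) ∨ (φ (p x) ∧ Z x ≤ Z k₁)) := by
      intro x
      constructor
      · rintro ⟨hx1, hx2⟩
        by_cases hφx : φ (p x)
        · exact Or.inr ⟨hφx, hx2⟩
        · exact Or.inl ⟨hφx, le_trans hjz hx1⟩
      · rintro (⟨hnφ, hzx⟩ | ⟨hφx, hxk⟩)
        · exact ⟨hjmin x (by simp [hnφ, hzx]), le_trans (hi₀max x (by simp [hnφ])) hk₁⟩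
        · exact ⟨le_of_lt (hsepφ j x hjU hφx), hxk⟩
    have hpart : ∀ (q : Fin n → Prop) (_ : DecidablePred q),
        (univ.filter fun ℓ => (Z j ≤ Z ℓ ∧ Z ℓ ≤ Z k₁) ∧ q ℓ).card
          = (univ.filter fun ℓ => (¬ φ (p ℓ) ∧ z ≤ Z ℓ) ∧ q ℓ).card
            + (univ.filter fun ℓ => (φ (p ℓ) ∧ Z ℓ ≤ Z k₁) ∧ q ℓ).card := by
      intro q hq
      apply partition_card
      · intro x hx1 hx2
        simp only [Finset.mem_filter] at hx1 hx2
        exact hcore2 x hx1.2.1 hx2.2.1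
      · intro x
        simp only [Finset.mem_filter, Finset.mem_univ, true_and]
        constructor
        · rintro ⟨hx, hqx⟩
          rcases (hcore1 x).mp hx with h | h
          · exact Or.inl ⟨h, hqx⟩
          · exact Or.inr ⟨h, hqx⟩
        · rintro (⟨hx, hqx⟩ | ⟨hx, hqx⟩)
          · exact ⟨(hcore1 x).mpr (Or.inl hx), hqx⟩
          · exact ⟨(hcore1 x).mpr (Or.inr hx), hqx⟩
    have h3 := hpart (fun ℓ => u ℓ < c) (by infer_instance)
    have h4 := hpart (fun ℓ => c < u ℓ) (by infer_instance)
    have hm2 := master2 hZ hu hb0 hbn hbmono hrmono hrep c φ hφub hφlb (Z k₁)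
    rw [← hp] at hm2
    omega
  · have e := Finset.not_nonempty_iff_eq_empty.mp hSne
    have c1 : (univ.filter fun ℓ => (¬ φ (p ℓ) ∧ z ≤ Z ℓ) ∧ c < u ℓ).card = 0 := by
      rw [Finset.card_eq_zero, ← Finset.subset_empty, ← e]
      exact Finset.monotone_filter_right _ (fun x _ h => h.1)
    rw [c1]
    exact Nat.zero_le _

include hZ hu hb0 hbn hbmono hrmono hrep in
/-- Suffix lemma for a block: on `Z`-suffixes of block `t`, entries above `r t` are
dominated by entries below `r t`. -/
lemma suf_block (t : Fin m) (z : ℝ) :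
    (univ.filter fun ℓ : Fin n =>
        ((b t.castSucc ≤ (ℓ : ℕ) ∧ (ℓ : ℕ) < b t.succ) ∧ z ≤ Z ℓ) ∧ r t < u ℓ).card
      ≤ (univ.filter fun ℓ : Fin n =>
        ((b t.castSucc ≤ (ℓ : ℕ) ∧ (ℓ : ℕ) < b t.succ) ∧ z ≤ Z ℓ) ∧ u ℓ < r t).card := by
  classical
  have hbt1n : b t.succ ≤ n := by
    have := hbmono.monotone (Fin.le_last t.succ)
    rwa [hbn] at this
  have hbtlt : b t.castSucc < b t.succ := hbmono (Fin.castSucc_lt_succ (i := t))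
  have hiTlt : b t.succ - 1 < n := by omega
  set iT : Fin n := ⟨b t.succ - 1, hiTlt⟩ with hiT
  have hiTB : b t.castSucc ≤ (iT : ℕ) ∧ (iT : ℕ) < b t.succ := by
    refine ⟨?_, ?_⟩ <;> simp only [hiT] <;> omega
  have hprojB : ∀ ℓ : Fin n, b t.castSucc ≤ (ℓ : ℕ) → (ℓ : ℕ) < b t.succ →
      isoMedProj n Z u ℓ = r t := fun ℓ h1 h2 => hrep t ℓ h1 h2
  have hBiff : ∀ ℓ : Fin n, isoMedProj n Z u ℓ = r t →
      b t.castSucc ≤ (ℓ : ℕ) ∧ (ℓ : ℕ) < b t.succ := by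
    intro ℓ h
    obtain ⟨t', h1, h2, h3⟩ := proj_block hb0 hbn hbmono hrep ℓ
    have ht' : t' = t := hrmono.injective (h3 ▸ h)
    subst ht'
    exact ⟨h1, h2⟩
  have hZge : ∀ ℓ : Fin n, (ℓ : ℕ) < b t.succ → Z ℓ ≤ Z iT := by
    intro ℓ h
    apply hZ
    rw [Fin.le_def]
    simp only [hiT]
    omega
  have hsep' : ∀ x y : Fin n, isoMedProj n Z u x < isoMedProj n Z u y → Z x < Z y :=
    fun x y => proj_sep hZ hb0 hbn hbmono hrmono hrep
  by_cases hSne : (univ.filter fun ℓ : Fin n =>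
      (b t.castSucc ≤ (ℓ : ℕ) ∧ (ℓ : ℕ) < b t.succ) ∧ z ≤ Z ℓ).Nonempty
  · obtain ⟨w, hw⟩ := hSne
    have hSne : (univ.filter fun ℓ : Fin n =>
        (b t.castSucc ≤ (ℓ : ℕ) ∧ (ℓ : ℕ) < b t.succ) ∧ z ≤ Z ℓ).Nonempty := ⟨w, hw⟩
    obtain ⟨j, hjm, hjmin⟩ := Finset.exists_min_image _ Z hSne
    have hjB : b t.castSucc ≤ (j : ℕ) ∧ (j : ℕ) < b t.succ := (Finset.mem_filter.mp hjm).2.1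
    have hjz : z ≤ Z j := (Finset.mem_filter.mp hjm).2.2
    obtain ⟨k₁, hk₁, hmed₁⟩ := IsoAux4.tool_A (Z := Z) (u := u) iT j (hZge j hjB.2)
    have hmedc : subMed n Z u (Z j) (Z k₁) ≤ r t := by
      calc subMed n Z u (Z j) (Z k₁) ≤ isoMedProj n Z u iT := hmed₁
        _ = r t := hprojB iT hiTB.1 hiTB.2
    have hstar := IsoAux5.submed_le_count hu hmedc
    have hcore1 : ∀ x : Fin n,
        (Z j ≤ Z x ∧ Z x ≤ Z k₁) ↔
          (((b t.castSucc ≤ (x : ℕ) ∧ (x : ℕ) < b t.succ) ∧ z ≤ Z x)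
            ∨ (r t < isoMedProj n Z u x ∧ Z x ≤ Z k₁)) := by
      intro x
      constructor
      · rintro ⟨hx1, hx2⟩
        rcases lt_trichotomy (isoMedProj n Z u x) (r t) with hc | hc | hc
        · exfalso
          have hlt : Z x < Z j := hsep' x j (by rw [hprojB j hjB.1 hjB.2]; exact hc)
          exact absurd hx1 (not_le.mpr hlt)
        · exact Or.inl ⟨hBiff x hc, le_trans hjz hx1⟩
        · exact Or.inr ⟨hc, hx2⟩
      · rintro (⟨hBx, hzx⟩ | ⟨hgt, hxk⟩)
        · refine ⟨hjmin x (Finset.mem_filter.mpr ⟨Finset.mem_univ x, hBx, hzx⟩),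
            le_trans (hZge x hBx.2) hk₁⟩
        · refine ⟨le_of_lt (hsep' j x ?_), hxk⟩
          rw [hprojB j hjB.1 hjB.2]
          exact hgt
    have hpart : ∀ (q : Fin n → Prop) (_ : DecidablePred q),
        (univ.filter fun ℓ => (Z j ≤ Z ℓ ∧ Z ℓ ≤ Z k₁) ∧ q ℓ).card
          = (univ.filter fun ℓ : Fin n =>
              ((b t.castSucc ≤ (ℓ : ℕ) ∧ (ℓ : ℕ) < b t.succ) ∧ z ≤ Z ℓ) ∧ q ℓ).card
            + (univ.filter fun ℓ =>
              (r t < isoMedProj n Z u ℓ ∧ Z ℓ ≤ Z k₁) ∧ q ℓ).card := by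
      intro q hq
      apply partition_card
      · intro x hx1 hx2
        simp only [Finset.mem_filter] at hx1 hx2
        have h5 := hprojB x hx1.2.1.1.1 hx1.2.1.1.2
        have h6 := hx2.2.1.1
        rw [h5] at h6
        exact lt_irrefl _ h6
      · intro x
        simp only [Finset.mem_filter, Finset.mem_univ, true_and]
        constructor
        · rintro ⟨hx, hqx⟩
          rcases (hcore1 x).mp hx with h | h
          · exact Or.inl ⟨h, hqx⟩
          · exact Or.inr ⟨h, hqx⟩
        · rintro (⟨hx, hqx⟩ | ⟨hx, hqx⟩)
          · exact ⟨(hcore1 x).mpr (Or.inl hx), hqx⟩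
          · exact ⟨(hcore1 x).mpr (Or.inr hx), hqx⟩
    have h3 := hpart (fun ℓ => u ℓ < r t) (by infer_instance)
    have h4 := hpart (fun ℓ => r t < u ℓ) (by infer_instance)
    have hm2 := master2 hZ hu hb0 hbn hbmono hrmono hrep (r t) (fun v => r t < v)
      (fun v hv => le_of_lt hv) (fun v hv => not_lt.mp hv) (Z k₁)
    omega
  · have e := Finset.not_nonempty_iff_eq_empty.mp hSne
    have c1 : (univ.filter fun ℓ : Fin n =>
        ((b t.castSucc ≤ (ℓ : ℕ) ∧ (ℓ : ℕ) < b t.succ) ∧ z ≤ Z ℓ) ∧ r t < u ℓ).card = 0 := by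
      rw [Finset.card_eq_zero, ← Finset.subset_empty, ← e]
      exact Finset.monotone_filter_right _ (fun x _ h => h.1)
    rw [c1]
    exact Nat.zero_le _

include hZ hu hb0 hbn hbmono hrmono hrep in
/-- Full-block prefix lemma: entries below `r t` are dominated by entries above `r t`. -/
lemma pre_block_full (t : Fin m) :
    (univ.filter fun ℓ : Fin n =>
        (b t.castSucc ≤ (ℓ : ℕ) ∧ (ℓ : ℕ) < b t.succ) ∧ u ℓ < r t).card
      ≤ (univ.filter fun ℓ : Fin n =>
        (b t.castSucc ≤ (ℓ : ℕ) ∧ (ℓ : ℕ) < b t.succ) ∧ r t < u ℓ).card := by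
  classical
  have hbt1n : b t.succ ≤ n := by
    have := hbmono.monotone (Fin.le_last t.succ)
    rwa [hbn] at this
  have hbtlt : b t.castSucc < b t.succ := hbmono (Fin.castSucc_lt_succ (i := t))
  have hiTlt : b t.succ - 1 < n := by omega
  have hiBlt : b t.castSucc < n := by omega
  set iT : Fin n := ⟨b t.succ - 1, hiTlt⟩ with hiT
  set iB : Fin n := ⟨b t.castSucc, hiBlt⟩ with hiB
  have hiTB : b t.castSucc ≤ (iT : ℕ) ∧ (iT : ℕ) < b t.succ := by
    refine ⟨?_, ?_⟩ <;> simp only [hiT] <;> omega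
  have hiBB : b t.castSucc ≤ (iB : ℕ) ∧ (iB : ℕ) < b t.succ := by
    refine ⟨?_, ?_⟩ <;> simp only [hiB] <;> omega
  have hprojB : ∀ ℓ : Fin n, b t.castSucc ≤ (ℓ : ℕ) → (ℓ : ℕ) < b t.succ →
      isoMedProj n Z u ℓ = r t := fun ℓ h1 h2 => hrep t ℓ h1 h2
  have hBiff : ∀ ℓ : Fin n, isoMedProj n Z u ℓ = r t →
      b t.castSucc ≤ (ℓ : ℕ) ∧ (ℓ : ℕ) < b t.succ := by
    intro ℓ h
    obtain ⟨t', h1, h2, h3⟩ := proj_block hb0 hbn hbmono hrep ℓ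
    have ht' : t' = t := hrmono.injective (h3 ▸ h)
    subst ht'
    exact ⟨h1, h2⟩
  have hZge : ∀ ℓ : Fin n, (ℓ : ℕ) < b t.succ → Z ℓ ≤ Z iT := by
    intro ℓ h
    apply hZ
    rw [Fin.le_def]
    simp only [hiT]
    omega
  have hZle : ∀ ℓ : Fin n, b t.castSucc ≤ (ℓ : ℕ) → Z iB ≤ Z ℓ := by
    intro ℓ h
    apply hZ
    rw [Fin.le_def]
    simp only [hiB]
    omega
  have hsep' : ∀ x y : Fin n, isoMedProj n Z u x < isoMedProj n Z u y → Z x < Z y :=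
    fun x y => proj_sep hZ hb0 hbn hbmono hrmono hrep
  obtain ⟨jh, hjhle, hjh⟩ := IsoAux4.tool_B (Z := Z) (u := u) iB
  have hmed : r t ≤ subMed n Z u (Z jh) (Z iT) := by
    have h1 := hjh iT (hZle iT hiTB.1)
    rwa [hprojB iB hiBB.1 hiBB.2] at h1
  have hcnt := IsoAux5.submed_ge_count hu hmed
  have hcore1 : ∀ x : Fin n,
      (Z jh ≤ Z x ∧ Z x ≤ Z iT) ↔
        ((b t.castSucc ≤ (x : ℕ) ∧ (x : ℕ) < b t.succ)
          ∨ (¬ (r t ≤ isoMedProj n Z u x) ∧ Z jh ≤ Z x)) := by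
    intro x
    constructor
    · rintro ⟨hx1, hx2⟩
      rcases lt_trichotomy (isoMedProj n Z u x) (r t) with hc | hc | hc
      · exact Or.inr ⟨not_le.mpr hc, hx1⟩
      · exact Or.inl (hBiff x hc)
      · exfalso
        have hlt : Z iT < Z x := hsep' iT x (by rw [hprojB iT hiTB.1 hiTB.2]; exact hc)
        exact absurd hx2 (not_le.mpr hlt)
    · rintro (hBx | ⟨hnle, hjx⟩)
      · exact ⟨le_trans hjhle (hZle x hBx.1), hZge x hBx.2⟩
      · refine ⟨hjx, le_of_lt (hsep' x iT ?_)⟩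
        rw [hprojB iT hiTB.1 hiTB.2]
        exact not_le.mp hnle
  have hpart : ∀ (q : Fin n → Prop) (_ : DecidablePred q),
      (univ.filter fun ℓ => (Z jh ≤ Z ℓ ∧ Z ℓ ≤ Z iT) ∧ q ℓ).card
        = (univ.filter fun ℓ : Fin n =>
            (b t.castSucc ≤ (ℓ : ℕ) ∧ (ℓ : ℕ) < b t.succ) ∧ q ℓ).card
          + (univ.filter fun ℓ =>
            (¬ (r t ≤ isoMedProj n Z u ℓ) ∧ Z jh ≤ Z ℓ) ∧ q ℓ).card := by
    intro q hq
    apply partition_card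
    · intro x hx1 hx2
      simp only [Finset.mem_filter] at hx1 hx2
      exact hx2.2.1.1 (le_of_eq (hprojB x hx1.2.1.1 hx1.2.1.2).symm)
    · intro x
      simp only [Finset.mem_filter, Finset.mem_univ, true_and]
      constructor
      · rintro ⟨hx, hqx⟩
        rcases (hcore1 x).mp hx with h | h
        · exact Or.inl ⟨h, hqx⟩
        · exact Or.inr ⟨h, hqx⟩
      · rintro (⟨hx, hqx⟩ | ⟨hx, hqx⟩)
        · exact ⟨(hcore1 x).mpr (Or.inl hx), hqx⟩
        · exact ⟨(hcore1 x).mpr (Or.inr hx), hqx⟩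
  have h3 := hpart (fun ℓ => u ℓ < r t) (by infer_instance)
  have h4 := hpart (fun ℓ => r t < u ℓ) (by infer_instance)
  have hm1 := master1 hZ hu hb0 hbn hbmono hrmono hrep (r t) (fun v => r t ≤ v)
    (fun v hv => hv) (fun v hv => le_of_lt (not_le.mp hv)) (Z jh)
  omega

lemma sort_drop_count {α : Type*} [LinearOrder α] [DecidableEq α] (s : Finset α) (j : ℕ)
    (hj : j < s.card) :
    s.card - j ≤ (s.filter fun x => (s.sort (· ≤ ·))[j]'(by
      rw [Finset.length_sort]; exact hj) ≤ x).card := by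
  classical
  set l := s.sort (· ≤ ·) with hl
  have hlen : l.length = s.card := Finset.length_sort _
  have hnd : l.Nodup := Finset.sort_nodup _ _
  have hsorted : l.Pairwise (· ≤ ·) := Finset.pairwise_sort _ _
  have hpair : ∀ i j' (hi : i < l.length) (hj' : j' < l.length), i ≤ j' → l[i] ≤ l[j'] := by
    intro i j' hi hj' hij
    rcases eq_or_lt_of_le hij with rfl | hlt
    · exact le_refl _
    · exact List.pairwise_iff_getElem.mp hsorted i j' hi hj' hlt
  have hsub : (l.drop j).toFinset ⊆ s.filter fun x => l[j]'(by omega) ≤ x := by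
    intro x hx
    rw [List.mem_toFinset] at hx
    obtain ⟨i, hi, rfl⟩ := List.mem_iff_getElem.mp hx
    have hi' : j + i < l.length := by
      have := hi; simp only [List.length_drop] at this; omega
    rw [List.getElem_drop]
    rw [Finset.mem_filter]
    constructor
    · rw [← Finset.mem_sort (α := α) (· ≤ ·), ← hl]
      exact List.getElem_mem _
    · exact hpair j (j + i) (by omega) hi' (by omega)
  have hcard : (l.drop j).toFinset.card = s.card - j := by
    rw [List.toFinset_card_of_nodup (hnd.sublist (List.drop_sublist _ _))]
    simp [hlen]
  calc s.card - j = (l.drop j).toFinset.card := hcard.symm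
    _ ≤ _ := Finset.card_le_card hsub

lemma sort_take_count {α : Type*} [LinearOrder α] [DecidableEq α] (s : Finset α) (j : ℕ)
    (hj : j < s.card) :
    j + 1 ≤ (s.filter fun x => x ≤ (s.sort (· ≤ ·))[j]'(by
      rw [Finset.length_sort]; exact hj)).card := by
  classical
  set l := s.sort (· ≤ ·) with hl
  have hlen : l.length = s.card := Finset.length_sort _
  have hnd : l.Nodup := Finset.sort_nodup _ _
  have hsorted : l.Pairwise (· ≤ ·) := Finset.pairwise_sort _ _
  have hpair : ∀ i j' (hi : i < l.length) (hj' : j' < l.length), i ≤ j' → l[i] ≤ l[j'] := by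
    intro i j' hi hj' hij
    rcases eq_or_lt_of_le hij with rfl | hlt
    · exact le_refl _
    · exact List.pairwise_iff_getElem.mp hsorted i j' hi hj' hlt
  have hsub : (l.take (j+1)).toFinset ⊆ s.filter fun x => x ≤ l[j]'(by omega) := by
    intro x hx
    rw [List.mem_toFinset] at hx
    obtain ⟨i, hi, rfl⟩ := List.mem_iff_getElem.mp hx
    have hi' : i < j + 1 := by
      have := hi; simp only [List.length_take] at this; omega
    have hi'' : i < l.length := by omega
    rw [List.getElem_take]
    rw [Finset.mem_filter]
    constructor
    · rw [← Finset.mem_sort (α := α) (· ≤ ·), ← hl]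
      exact List.getElem_mem _
    · exact hpair i j hi'' (by omega) (by omega)
  have hcard : (l.take (j+1)).toFinset.card = j + 1 := by
    rw [List.toFinset_card_of_nodup (hnd.sublist (List.take_sublist _ _))]
    simp [hlen]
    omega
  calc j + 1 = (l.take (j+1)).toFinset.card := hcard.symm
    _ ≤ _ := Finset.card_le_card hsub

include hZ hu hb0 hbn hbmono hrmono hrep in
lemma card_PN (t : Fin m) :
    (blockPos n u (b t.castSucc) (b t.succ) (r t)).card
      = (blockNeg n u (b t.castSucc) (b t.succ) (r t)).card := by
  classical
  have hbt1n : b t.succ ≤ n := by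
    have := hbmono.monotone (Fin.le_last t.succ)
    rwa [hbn] at this
  have hbtlt : b t.castSucc < b t.succ := hbmono (Fin.castSucc_lt_succ (i := t))
  have hiBlt : b t.castSucc < n := by omega
  set iB : Fin n := ⟨b t.castSucc, hiBlt⟩ with hiB
  have hZle : ∀ ℓ : Fin n, b t.castSucc ≤ (ℓ : ℕ) → Z iB ≤ Z ℓ := by
    intro ℓ h
    apply hZ
    rw [Fin.le_def]
    simp only [hiB]
    omega
  have ePos : blockPos n u (b t.castSucc) (b t.succ) (r t)
      = univ.filter (fun ℓ : Fin n =>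
          (b t.castSucc ≤ (ℓ : ℕ) ∧ (ℓ : ℕ) < b t.succ) ∧ r t < u ℓ) := by
    unfold blockPos
    apply Finset.filter_congr
    intro x _
    rw [and_assoc]
  have eNeg : blockNeg n u (b t.castSucc) (b t.succ) (r t)
      = univ.filter (fun ℓ : Fin n =>
          (b t.castSucc ≤ (ℓ : ℕ) ∧ (ℓ : ℕ) < b t.succ) ∧ u ℓ < r t) := by
    unfold blockNeg
    apply Finset.filter_congr
    intro x _
    rw [and_assoc]
  have ePos2 : (univ.filter fun ℓ : Fin n =>
      ((b t.castSucc ≤ (ℓ : ℕ) ∧ (ℓ : ℕ) < b t.succ) ∧ Z iB ≤ Z ℓ) ∧ r t < u ℓ)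
      = univ.filter (fun ℓ : Fin n =>
          (b t.castSucc ≤ (ℓ : ℕ) ∧ (ℓ : ℕ) < b t.succ) ∧ r t < u ℓ) := by
    apply Finset.filter_congr
    intro x _
    constructor
    · rintro ⟨⟨h1, _⟩, h3⟩
      exact ⟨h1, h3⟩
    · rintro ⟨h1, h3⟩
      exact ⟨⟨h1, hZle x h1.1⟩, h3⟩
  have eNeg2 : (univ.filter fun ℓ : Fin n =>
      ((b t.castSucc ≤ (ℓ : ℕ) ∧ (ℓ : ℕ) < b t.succ) ∧ Z iB ≤ Z ℓ) ∧ u ℓ < r t)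
      = univ.filter (fun ℓ : Fin n =>
          (b t.castSucc ≤ (ℓ : ℕ) ∧ (ℓ : ℕ) < b t.succ) ∧ u ℓ < r t) := by
    apply Finset.filter_congr
    intro x _
    constructor
    · rintro ⟨⟨h1, _⟩, h3⟩
      exact ⟨h1, h3⟩
    · rintro ⟨h1, h3⟩
      exact ⟨⟨h1, hZle x h1.1⟩, h3⟩
  have h1 := pre_block_full hZ hu hb0 hbn hbmono hrmono hrep t
  have h2 := suf_block hZ hu hb0 hbn hbmono hrmono hrep t (Z iB)
  rw [ePos2, eNeg2] at h2
  rw [ePos, eNeg]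
  omega

end IsoMain

/-- isotonic median matching is a valid matching: assume
`Z_1 ≤ … ≤ Z_n`, the entries of `u` are all distinct, and `(b, r)` is a block
representation of the isotonic median projection `ũ` of `u`. Writing, for each block
`t`, `P_t` (resp. `N_t`) for the indices in the block with `u_ℓ > r_t` (resp.
`u_ℓ < r_t`), with increasing enumerations `ℓ⁺_{t,·}`, `ℓ⁻_{t,·}`: (1) `|P_t| = |N_t|`;
(2) `u_ℓ = ũ_ℓ` for block indices outside `P_t ∪ N_t`; (3) the pairs
`(ℓ⁺_{t,j}, ℓ⁻_{t,j})`, `j < min{|P_t|,|N_t|}`, satisfy `Z_{ℓ⁺_{t,j}} ≤ Z_{ℓ⁻_{t,j}}`;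
and (4) all matched indices are distinct. -/
theorem isotonic_median_matching_valid (n : ℕ) (hn : 0 < n) (Z u : Fin n → ℝ)
    (hZ : Monotone Z) (hu : Function.Injective u)
    (m : ℕ) (b : Fin (m + 1) → ℕ) (r : Fin m → ℝ)
    (hb0 : b 0 = 0) (hbn : b (Fin.last m) = n) (hbmono : StrictMono b)
    (hrmono : StrictMono r)
    (hrep : ∀ (t : Fin m) (i : Fin n),
      b t.castSucc ≤ (i : ℕ) → (i : ℕ) < b t.succ → isoMedProj n Z u i = r t) :
    (∀ t : Fin m,
      (blockPos n u (b t.castSucc) (b t.succ) (r t)).card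
        = (blockNeg n u (b t.castSucc) (b t.succ) (r t)).card) ∧
    (∀ (t : Fin m) (ℓ : Fin n), b t.castSucc ≤ (ℓ : ℕ) → (ℓ : ℕ) < b t.succ →
      ℓ ∉ blockPos n u (b t.castSucc) (b t.succ) (r t) →
      ℓ ∉ blockNeg n u (b t.castSucc) (b t.succ) (r t) →
      u ℓ = isoMedProj n Z u ℓ) ∧
    (∀ (t : Fin m) (j : ℕ),
      j < min (blockPos n u (b t.castSucc) (b t.succ) (r t)).card
              (blockNeg n u (b t.castSucc) (b t.succ) (r t)).card →
      Z (nthIdx n hn (blockPos n u (b t.castSucc) (b t.succ) (r t)) j)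
        ≤ Z (nthIdx n hn (blockNeg n u (b t.castSucc) (b t.succ) (r t)) j)) ∧
    (∀ (t t' : Fin m) (j j' : ℕ),
      j < min (blockPos n u (b t.castSucc) (b t.succ) (r t)).card
              (blockNeg n u (b t.castSucc) (b t.succ) (r t)).card →
      j' < min (blockPos n u (b t'.castSucc) (b t'.succ) (r t')).card
              (blockNeg n u (b t'.castSucc) (b t'.succ) (r t')).card →
      (nthIdx n hn (blockPos n u (b t.castSucc) (b t.succ) (r t)) j
          ≠ nthIdx n hn (blockNeg n u (b t'.castSucc) (b t'.succ) (r t')) j') ∧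
      (nthIdx n hn (blockPos n u (b t.castSucc) (b t.succ) (r t)) j
          = nthIdx n hn (blockPos n u (b t'.castSucc) (b t'.succ) (r t')) j'
        → t = t' ∧ j = j') ∧
      (nthIdx n hn (blockNeg n u (b t.castSucc) (b t.succ) (r t)) j
          = nthIdx n hn (blockNeg n u (b t'.castSucc) (b t'.succ) (r t')) j'
        → t = t' ∧ j = j')) := by
  classical
  have hblockPos_mem : ∀ (t : Fin m) (x : Fin n),
      x ∈ blockPos n u (b t.castSucc) (b t.succ) (r t) ↔
        b t.castSucc ≤ (x : ℕ) ∧ (x : ℕ) < b t.succ ∧ r t < u x := by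
    intro t x
    unfold blockPos
    simp [Finset.mem_filter]
  have hblockNeg_mem : ∀ (t : Fin m) (x : Fin n),
      x ∈ blockNeg n u (b t.castSucc) (b t.succ) (r t) ↔
        b t.castSucc ≤ (x : ℕ) ∧ (x : ℕ) < b t.succ ∧ u x < r t := by
    intro t x
    unfold blockNeg
    simp [Finset.mem_filter]
  have hnth_mem : ∀ (s : Finset (Fin n)) (j : ℕ) (hj : j < s.card),
      nthIdx n hn s j ∈ s ∧ nthIdx n hn s j = (s.sort (· ≤ ·))[j]'(by
        rw [Finset.length_sort]; exact hj) := by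
    intro s j hj
    have hlen : j < (s.sort (· ≤ ·)).length := by rw [Finset.length_sort]; exact hj
    have heq : nthIdx n hn s j = (s.sort (· ≤ ·))[j]'hlen := by
      unfold nthIdx
      exact List.getD_eq_getElem _ _ hlen
    refine ⟨?_, heq⟩
    rw [heq, ← Finset.mem_sort (α := Fin n) (· ≤ ·)]
    exact List.getElem_mem _
  refine ⟨?_, ?_, ?_, ?_⟩
  · -- (1) cardinalities agree
    intro t
    exact IsoMain.card_PN hZ hu hb0 hbn hbmono hrmono hrep t
  · -- (2) unmatched entries are fixed
    intro t ℓ h1 h2 hp hnn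
    have hp' : ¬ (r t < u ℓ) := fun hlt => hp ((hblockPos_mem t ℓ).mpr ⟨h1, h2, hlt⟩)
    have hn' : ¬ (u ℓ < r t) := fun hlt => hnn ((hblockNeg_mem t ℓ).mpr ⟨h1, h2, hlt⟩)
    have hEq : u ℓ = r t := le_antisymm (not_lt.mp hp') (not_lt.mp hn')
    rw [hrep t ℓ h1 h2]
    exact hEq
  · -- (3) matched pairs are ordered
    intro t j hj
    set P := blockPos n u (b t.castSucc) (b t.succ) (r t) with hP
    set N := blockNeg n u (b t.castSucc) (b t.succ) (r t) with hN
    have hcards : P.card = N.card := IsoMain.card_PN hZ hu hb0 hbn hbmono hrmono hrep t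
    have hjP : j < P.card := lt_of_lt_of_le hj (min_le_left _ _)
    have hjN : j < N.card := lt_of_lt_of_le hj (min_le_right _ _)
    obtain ⟨haP, haeq⟩ := hnth_mem P j hjP
    obtain ⟨haN, haeq'⟩ := hnth_mem N j hjN
    set a := nthIdx n hn P j with ha
    set a' := nthIdx n hn N j with ha'
    by_contra hcon
    push_neg at hcon
    -- hcon : Z a' < Z a
    have haB := (hblockPos_mem t a).mp haP
    have haB' := (hblockNeg_mem t a').mp haN
    have hsuf := IsoMain.suf_block hZ hu hb0 hbn hbmono hrmono hrep t (Z a)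
    -- lower bound for the `>` side
    have hsub1 : P.filter (fun x => a ≤ x) ⊆
        Finset.univ.filter fun ℓ : Fin n =>
          ((b t.castSucc ≤ (ℓ : ℕ) ∧ (ℓ : ℕ) < b t.succ) ∧ Z a ≤ Z ℓ) ∧ r t < u ℓ := by
      intro x hx
      rw [Finset.mem_filter] at hx
      have hxB := (hblockPos_mem t x).mp hx.1
      rw [Finset.mem_filter]
      exact ⟨Finset.mem_univ x, ⟨⟨hxB.1, hxB.2.1⟩, hZ hx.2⟩, hxB.2.2⟩
    have hlow : P.card - j ≤ (P.filter (fun x => a ≤ x)).card := by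
      have := IsoMain.sort_drop_count P j hjP
      have he : ∀ x : Fin n, ((P.sort (· ≤ ·))[j]'(by
          rw [Finset.length_sort]; exact hjP) ≤ x) ↔ (a ≤ x) := by
        intro x
        rw [haeq]
      calc P.card - j ≤ (P.filter fun x => (P.sort (· ≤ ·))[j]'(by
            rw [Finset.length_sort]; exact hjP) ≤ x).card := this
        _ = (P.filter (fun x => a ≤ x)).card := by
            apply congrArg
            apply Finset.filter_congr
            intro x _
            exact he x
    -- upper bound for the `<` side
    have hsub2 : (Finset.univ.filter fun ℓ : Fin n =>
        ((b t.castSucc ≤ (ℓ : ℕ) ∧ (ℓ : ℕ) < b t.succ) ∧ Z a ≤ Z ℓ) ∧ u ℓ < r t)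
          ⊆ N.filter (fun x => ¬ (x ≤ a')) := by
      intro x hx
      rw [Finset.mem_filter] at hx
      obtain ⟨-, ⟨⟨hx1, hx2⟩, hx3⟩, hx4⟩ := hx
      rw [Finset.mem_filter]
      refine ⟨(hblockNeg_mem t x).mpr ⟨hx1, hx2, hx4⟩, ?_⟩
      intro hle
      have : Z x ≤ Z a' := hZ hle
      have : Z x < Z a := lt_of_le_of_lt this hcon
      exact absurd hx3 (not_le.mpr this)
    have htake : j + 1 ≤ (N.filter (fun x => x ≤ a')).card := by
      have := IsoMain.sort_take_count N j hjN
      calc j + 1 ≤ (N.filter fun x => x ≤ (N.sort (· ≤ ·))[j]'(by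
            rw [Finset.length_sort]; exact hjN)).card := this
        _ = (N.filter (fun x => x ≤ a')).card := by
            apply congrArg
            apply Finset.filter_congr
            intro x _
            rw [haeq']
    have hsplitN : (N.filter (fun x => x ≤ a')).card
        + (N.filter (fun x => ¬ (x ≤ a'))).card = N.card := by
      simpa using Finset.card_filter_add_card_filter_not
        (s := N) (p := fun x => x ≤ a')
    have hc1 : (P.filter (fun x => a ≤ x)).card ≤ (Finset.univ.filter fun ℓ : Fin n =>
        ((b t.castSucc ≤ (ℓ : ℕ) ∧ (ℓ : ℕ) < b t.succ) ∧ Z a ≤ Z ℓ) ∧ r t < u ℓ).card :=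
      Finset.card_le_card hsub1
    have hc2 : (Finset.univ.filter fun ℓ : Fin n =>
        ((b t.castSucc ≤ (ℓ : ℕ) ∧ (ℓ : ℕ) < b t.succ) ∧ Z a ≤ Z ℓ) ∧ u ℓ < r t).card
          ≤ (N.filter (fun x => ¬ (x ≤ a'))).card :=
      Finset.card_le_card hsub2
    omega
  · -- (4) distinctness
    intro t t' j j' hj hj'
    have hjP : j < (blockPos n u (b t.castSucc) (b t.succ) (r t)).card :=
      lt_of_lt_of_le hj (min_le_left _ _)
    have hjN : j < (blockNeg n u (b t.castSucc) (b t.succ) (r t)).card :=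
      lt_of_lt_of_le hj (min_le_right _ _)
    have hj'P : j' < (blockPos n u (b t'.castSucc) (b t'.succ) (r t')).card :=
      lt_of_lt_of_le hj' (min_le_left _ _)
    have hj'N : j' < (blockNeg n u (b t'.castSucc) (b t'.succ) (r t')).card :=
      lt_of_lt_of_le hj' (min_le_right _ _)
    refine ⟨?_, ?_, ?_⟩
    · intro he
      obtain ⟨haP, -⟩ := hnth_mem _ j hjP
      obtain ⟨haN, -⟩ := hnth_mem _ j' hj'N
      rw [he] at haP
      have h1 := (hblockPos_mem t _).mp haP
      have h2 := (hblockNeg_mem t' _).mp haN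
      have htt : t = t' := IsoMain.block_uniq hbmono h1.1 h1.2.1 h2.1 h2.2.1
      subst htt
      exact absurd (lt_trans h1.2.2 h2.2.2) (lt_irrefl _)
    · intro he
      obtain ⟨haP, haeq⟩ := hnth_mem _ j hjP
      obtain ⟨haP', haeq'⟩ := hnth_mem _ j' hj'P
      have h1 := (hblockPos_mem t _).mp haP
      have h2 := (hblockPos_mem t' _).mp haP'
      rw [he] at h1
      have htt : t = t' := IsoMain.block_uniq hbmono h1.1 h1.2.1 h2.1 h2.2.1
      subst htt
      refine ⟨rfl, ?_⟩
      rw [haeq, haeq'] at he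
      exact ((Finset.sort_nodup _ (· ≤ ·)).getElem_inj_iff).mp he
    · intro he
      obtain ⟨haN, haeq⟩ := hnth_mem _ j hjN
      obtain ⟨haN', haeq'⟩ := hnth_mem _ j' hj'N
      have h1 := (hblockNeg_mem t _).mp haN
      have h2 := (hblockNeg_mem t' _).mp haN'
      rw [he] at h1
      have htt : t = t' := IsoMain.block_uniq hbmono h1.1 h1.2.1 h2.1 h2.2.1
      subst htt
      refine ⟨rfl, ?_⟩
      rw [haeq, haeq'] at he
      exact ((Finset.sort_nodup _ (· ≤ ·)).getElem_inj_iff).mp he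


end
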